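/- There exists a function ζ : Λ → ℚ(p,q) with all values nonzero such that for all μ ∈ Λ: ζ(μ + α_i) = −q^{(α_i − α_{−i}, μ + α_i)}·ζ(μ) and ζ(μ + α_{−i}) = −q^{(α_{−i}, μ + α_{−i}) − (α_i, μ)}·ζ(μ) for all i ∈ {3/2, 5/2, …, r−1/2}, ζ(μ + α_{1/2}) = −p·q^{(α_{1/2} − α_{−1/2}, μ + α_{1/2}) − 1}·ζ(μ), and ζ(μ + α_{−1/2}) = −p^{−1}·q^{(α_{−1/2}, μ + α_{−1/2}) − (α_{1/2}, μ) + 1}·ζ(μ), and such that ζ(ε_{−r}) = 1. Moreover, every such ζ satisfies ζ(ε_{−i}) = (−q)^{−r+i} for all i ∈ {−r, …, r} with i ≠ 0, and ζ(ε_0) = p·(−q)^{−r}. -/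

import Mathlib

open scoped BigOperators

attribute [local instance] Classical.propDecidable

noncomputable section

/-- The field `ℚ(p,q)` of rational functions in two indeterminates over `ℚ`. -/
abbrev K2 : Type := FractionRing (MvPolynomial (Fin 2) ℚ)

/-- The indeterminate `p`. -/
noncomputable def pp : K2 := algebraMap (MvPolynomial (Fin 2) ℚ) K2 (MvPolynomial.X 0)

/-- The indeterminate `q`. -/
noncomputable def qq : K2 := algebraMap (MvPolynomial (Fin 2) ℚ) K2 (MvPolynomial.X 1)

/-- The index set `I = {-r, -r+1, ..., r}` of integers, as a subtype of `ℚ`. -/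
def IIdx (r : ℕ) : Type := {a : ℚ // ∃ k : ℤ, -(r : ℤ) ≤ k ∧ k ≤ r ∧ a = (k : ℚ)}

instance (r : ℕ) : DecidableEq (IIdx r) := fun a b =>
  decidable_of_iff (a.1 = b.1) Subtype.ext_iff.symm

/-- Negation on the index set. -/
def IIdx.neg {r : ℕ} (a : IIdx r) : IIdx r :=
  ⟨-a.1, by
    obtain ⟨k, h1, h2, h3⟩ := a.2
    exact ⟨-k, by omega, by omega, by rw [h3]; push_cast; ring⟩⟩

/-- Interpret a rational number as an element of the index set (junk value if out of range). -/
def toII (r : ℕ) (a : ℚ) : IIdx r :=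
  if h : ∃ k : ℤ, -(r : ℤ) ≤ k ∧ k ≤ r ∧ a = (k : ℚ) then ⟨a, h⟩
  else ⟨0, ⟨0, by omega, by omega, by norm_num⟩⟩

/-- The set of indices `{1/2, 3/2, …, r-1/2}`. -/
def Ijset (r : ℕ) : Set ℚ := {i | ∃ k : ℕ, k + 1 ≤ r ∧ i = (k : ℚ) + 1/2}

/-- The weight lattice `Λ`, the free abelian group on the symbols `ε_a`, `a ∈ {-r, …, r}`. -/
abbrev Lam (r : ℕ) : Type := IIdx r →₀ ℤ

/-- The symmetric bilinear form on `Λ` with `(ε_a, ε_b) = δ_{a,b}`. -/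
def bilin {r : ℕ} (x y : Lam r) : ℤ := x.sum (fun a n => n * y a)

/-- The basis element `ε_a` of `Λ` (for a rational label `a`). -/
def epsv (r : ℕ) (a : ℚ) : Lam r := Finsupp.single (toII r a) 1

/-- The simple root `α_i = ε_{i-1/2} - ε_{i+1/2}` (for a half-integer label `i`). -/
def alR (r : ℕ) (i : ℚ) : Lam r := epsv r (i - 1/2) - epsv r (i + 1/2)

/-- The defining conditions on the function `ζ : Λ → ℚ(p,q)` (odd case). -/
def zetaCond (r : ℕ) (ζ : Lam r → K2) : Prop :=
  (∀ μ : Lam r, ζ μ ≠ 0) ∧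
  (∀ μ : Lam r, ∀ i : ℚ, i ∈ Ijset r → i ≠ 1/2 →
    ζ (μ + alR r i) = -(qq ^ (bilin (alR r i - alR r (-i)) (μ + alR r i))) * ζ μ ∧
    ζ (μ + alR r (-i)) = -(qq ^ (bilin (alR r (-i)) (μ + alR r (-i)) - bilin (alR r i) μ)) * ζ μ) ∧
  (∀ μ : Lam r,
    ζ (μ + alR r (1/2))
      = -pp * qq ^ (bilin (alR r (1/2) - alR r (-(1/2))) (μ + alR r (1/2)) - 1) * ζ μ) ∧
  (∀ μ : Lam r,
    ζ (μ + alR r (-(1/2)))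
      = -pp⁻¹ * qq ^ (bilin (alR r (-(1/2))) (μ + alR r (-(1/2))) - bilin (alR r (1/2)) μ + 1)
          * ζ μ)

section Helpers
variable {r : ℕ}

lemma pp_ne : pp ≠ 0 := by
  unfold pp
  simpa using (IsFractionRing.to_map_eq_zero_iff (K := K2)).not.mpr (MvPolynomial.X_ne_zero 0)

lemma qq_ne : qq ≠ 0 := by
  unfold qq
  simpa using (IsFractionRing.to_map_eq_zero_iff (K := K2)).not.mpr (MvPolynomial.X_ne_zero 1)

lemma nqq_ne : (-qq : K2) ≠ 0 := neg_ne_zero.mpr qq_ne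

/-- coordinate of `μ` at the integer label `m` -/
def co (r : ℕ) (m : ℤ) (μ : Lam r) : ℤ := μ (toII r (m : ℚ))

lemma toII_val {m : ℤ} (h1 : -(r:ℤ) ≤ m) (h2 : m ≤ r) : (toII r (m:ℚ)).1 = (m:ℚ) := by
  have hh : ∃ k : ℤ, -(r : ℤ) ≤ k ∧ k ≤ r ∧ (m:ℚ) = (k : ℚ) := ⟨m, h1, h2, rfl⟩
  exact congrArg Subtype.val (dif_pos hh : toII r (m:ℚ) = (⟨(m:ℚ), hh⟩ : IIdx r))

lemma toII_inj {m m' : ℤ} (h1 : -(r:ℤ) ≤ m) (h2 : m ≤ r) (h1' : -(r:ℤ) ≤ m') (h2' : m' ≤ r) :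
    toII r (m:ℚ) = toII r (m':ℚ) ↔ m = m' := by
  constructor
  · intro h
    have h' := congrArg Subtype.val h
    rw [toII_val h1 h2, toII_val h1' h2'] at h'
    exact_mod_cast h'
  · rintro rfl; rfl

lemma co_epsv {m m' : ℤ} (h1 : -(r:ℤ) ≤ m) (h2 : m ≤ r) (h1' : -(r:ℤ) ≤ m') (h2' : m' ≤ r) :
    co r m (epsv r (m':ℚ)) = if m = m' then 1 else 0 := by
  unfold co epsv
  rw [Finsupp.single_apply]
  by_cases h : m = m'
  · subst h; simp
  · rw [if_neg, if_neg h]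
    intro hc
    exact h (((toII_inj h1' h2' h1 h2).mp hc).symm)

lemma co_move {m u v : ℤ} (hm1 : -(r:ℤ) ≤ m) (hm2 : m ≤ r) (hu1 : -(r:ℤ) ≤ u) (hu2 : u ≤ r)
    (hv1 : -(r:ℤ) ≤ v) (hv2 : v ≤ r) (μ : Lam r) :
    co r m (μ + (epsv r (u:ℚ) - epsv r (v:ℚ)))
      = co r m μ + (if m = u then 1 else 0) - (if m = v then 1 else 0) := by
  have h1 : co r m (μ + (epsv r (u:ℚ) - epsv r (v:ℚ)))
      = co r m μ + co r m (epsv r (u:ℚ)) - co r m (epsv r (v:ℚ)) := by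
    simp only [co, Finsupp.add_apply, Finsupp.sub_apply]
    ring
  rw [h1, co_epsv hm1 hm2 hu1 hu2, co_epsv hm1 hm2 hv1 hv2]

lemma bilin_single (a : IIdx r) (n : ℤ) (y : Lam r) :
    bilin (Finsupp.single a n) y = n * y a := by
  unfold bilin
  exact Finsupp.sum_single_index (zero_mul _)

lemma bilin_sub_left (x x' y : Lam r) : bilin (x - x') y = bilin x y - bilin x' y := by
  unfold bilin
  exact Finsupp.sum_sub_index (fun a b c => sub_mul b c (y a))

lemma bilin_epsv (u v : ℤ) (y : Lam r) :
    bilin (epsv r (u:ℚ) - epsv r (v:ℚ)) y = co r u y - co r v y := by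
  rw [bilin_sub_left]
  unfold epsv co
  rw [bilin_single, bilin_single]
  ring

end Helpers
section Helpers2
variable {r : ℕ}

def Iic2 (r : ℕ) : Finset ℤ := Finset.Icc (-(r:ℤ)) (r:ℤ)

lemma mem_Iic2 {m : ℤ} : m ∈ Iic2 r ↔ -(r:ℤ) ≤ m ∧ m ≤ r := by
  unfold Iic2; exact Finset.mem_Icc

def nn (r : ℕ) (μ : Lam r) : ℤ := ∑ m ∈ Iic2 r, m * co r m μ
def LL (r : ℕ) (μ : Lam r) : ℤ := ∑ m ∈ Iic2 r, ((r:ℤ) - m) * co r m μ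
def gg (s : ℤ) : ℤ := s * (s - 1) / 2
def sval (r : ℕ) (j : ℤ) (μ : Lam r) : ℤ := co r j μ + co r (-j) μ
def SS (r : ℕ) (μ : Lam r) : ℤ := ∑ a ∈ Finset.range r, gg (sval r ((a:ℤ)+1) μ)
def BB (r : ℕ) (μ : Lam r) : ℤ := (co r 0 μ)^2 + SS r μ + LL r μ - co r 0 μ

noncomputable def zeta (r : ℕ) (μ : Lam r) : K2 :=
  (-1:K2)^((r:ℤ) + nn r μ) * pp^(co r 0 μ) * qq^(BB r μ - 2*(r:ℤ))

lemma even_gg (s : ℤ) : Even (s * (s-1)) := by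
  rcases Int.even_or_odd s with ⟨t, ht⟩ | ⟨t, ht⟩
  · exact ⟨t*(s-1), by rw [ht]; ring⟩
  · exact ⟨s*t, by rw [ht]; ring⟩

lemma gg_add_one (s : ℤ) : gg (s+1) = gg s + s := by
  obtain ⟨t, ht⟩ := even_gg s
  have h2 : (s+1) * (s+1-1) = s*(s-1) + 2*s := by ring
  unfold gg
  rw [h2, ht]
  omega

lemma gg_sub_one (s : ℤ) : gg (s-1) = gg s + 1 - s := by
  obtain ⟨t, ht⟩ := even_gg s
  have h2 : (s-1) * (s-1-1) = s*(s-1) - 2*(s-1) := by ring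
  unfold gg
  rw [h2, ht]
  omega

lemma sum_move {u v : ℤ} (hu1 : -(r:ℤ) ≤ u) (hu2 : u ≤ r) (hv1 : -(r:ℤ) ≤ v) (hv2 : v ≤ r)
    (μ : Lam r) (f : ℤ → ℤ) :
    ∑ m ∈ Iic2 r, f m * co r m (μ + (epsv r (u:ℚ) - epsv r (v:ℚ)))
      = (∑ m ∈ Iic2 r, f m * co r m μ) + f u - f v := by
  have key : ∀ m ∈ Iic2 r, f m * co r m (μ + (epsv r (u:ℚ) - epsv r (v:ℚ)))
      = f m * co r m μ + ((if m = u then f m else 0) - (if m = v then f m else 0)) := by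
    intro m hm
    rw [mem_Iic2] at hm
    rw [co_move hm.1 hm.2 hu1 hu2 hv1 hv2]
    rw [mul_sub, mul_add, mul_ite, mul_ite, mul_one, mul_zero]
    ring
  rw [Finset.sum_congr rfl key, Finset.sum_add_distrib, Finset.sum_sub_distrib,
      Finset.sum_ite_eq' (Iic2 r) u f, Finset.sum_ite_eq' (Iic2 r) v f,
      if_pos (mem_Iic2.mpr ⟨hu1, hu2⟩), if_pos (mem_Iic2.mpr ⟨hv1, hv2⟩)]
  ring

lemma sum_epsv {w : ℤ} (hw1 : -(r:ℤ) ≤ w) (hw2 : w ≤ r) (f : ℤ → ℤ) :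
    ∑ m ∈ Iic2 r, f m * co r m (epsv r (w:ℚ)) = f w := by
  have key : ∀ m ∈ Iic2 r, f m * co r m (epsv r (w:ℚ)) = (if m = w then f m else 0) := by
    intro m hm
    rw [mem_Iic2] at hm
    rw [co_epsv hm.1 hm.2 hw1 hw2]
    by_cases h1 : m = w <;> simp [h1]
  rw [Finset.sum_congr rfl key, Finset.sum_ite_eq' (Iic2 r) w f,
      if_pos (mem_Iic2.mpr ⟨hw1, hw2⟩)]

lemma nn_move {u v : ℤ} (hu1 : -(r:ℤ) ≤ u) (hu2 : u ≤ r) (hv1 : -(r:ℤ) ≤ v) (hv2 : v ≤ r)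
    (μ : Lam r) :
    nn r (μ + (epsv r (u:ℚ) - epsv r (v:ℚ))) = nn r μ + u - v :=
  sum_move hu1 hu2 hv1 hv2 μ (fun m => m)

lemma LL_move {u v : ℤ} (hu1 : -(r:ℤ) ≤ u) (hu2 : u ≤ r) (hv1 : -(r:ℤ) ≤ v) (hv2 : v ≤ r)
    (μ : Lam r) :
    LL r (μ + (epsv r (u:ℚ) - epsv r (v:ℚ))) = LL r μ + v - u := by
  have := sum_move hu1 hu2 hv1 hv2 μ (fun m => (r:ℤ) - m)
  unfold LL
  rw [this]; ring

end Helpers2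
section Helpers3
variable {r : ℕ}

lemma sum_gg_two (s s' : ℕ → ℤ) {x y : ℕ} (hx : x ∈ Finset.range r) (hy : y ∈ Finset.range r)
    (hxy : x ≠ y)
    (h : ∀ a ∈ Finset.range r, s' a = s a + (if a = x then 1 else 0) - (if a = y then 1 else 0)) :
    ∑ a ∈ Finset.range r, gg (s' a)
      = (∑ a ∈ Finset.range r, gg (s a)) + ((s x) + (1 - s y)) := by
  have key : ∀ a ∈ Finset.range r, gg (s' a)
      = gg (s a) + ((if a = x then s a else 0) + (if a = y then 1 - s a else 0)) := by
    intro a ha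
    rw [h a ha]
    by_cases h1 : a = x
    · subst h1
      rw [if_pos rfl, if_pos rfl, if_neg hxy, if_neg hxy]
      have : s a + 1 - 0 = s a + 1 := by ring
      rw [this, gg_add_one]; ring
    · rw [if_neg h1, if_neg h1]
      by_cases h2 : a = y
      · subst h2
        rw [if_pos rfl, if_pos rfl]
        have : s a + 0 - 1 = s a - 1 := by ring
        rw [this, gg_sub_one]; ring
      · rw [if_neg h2, if_neg h2]
        have : s a + 0 - 0 = s a := by ring
        rw [this]; ring
  rw [Finset.sum_congr rfl key, Finset.sum_add_distrib, Finset.sum_add_distrib,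
      Finset.sum_ite_eq' (Finset.range r) x s,
      Finset.sum_ite_eq' (Finset.range r) y (fun a => 1 - s a),
      if_pos hx, if_pos hy]

lemma sum_gg_one (s s' : ℕ → ℤ) {x : ℕ} (hx : x ∈ Finset.range r) (d : ℤ)
    (hd : d = 1 ∨ d = -1)
    (h : ∀ a ∈ Finset.range r, s' a = s a + (if a = x then d else 0)) :
    ∑ a ∈ Finset.range r, gg (s' a)
      = (∑ a ∈ Finset.range r, gg (s a)) + (if d = 1 then s x else 1 - s x) := by
  have key : ∀ a ∈ Finset.range r, gg (s' a)
      = gg (s a) + (if a = x then (if d = 1 then s a else 1 - s a) else 0) := by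
    intro a ha
    rw [h a ha]
    by_cases h1 : a = x
    · subst h1
      rw [if_pos rfl, if_pos rfl]
      rcases hd with hd | hd
      · subst hd; rw [if_pos rfl, gg_add_one]
      · subst hd
        rw [if_neg (by norm_num)]
        have : s a + (-1) = s a - 1 := by ring
        rw [this, gg_sub_one]; ring
    · rw [if_neg h1, if_neg h1]
      have : s a + 0 = s a := by ring
      rw [this]; ring
  rw [Finset.sum_congr rfl key, Finset.sum_add_distrib,
      Finset.sum_ite_eq' (Finset.range r) x (fun a => if d = 1 then s a else 1 - s a),
      if_pos hx]

end Helpers3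
section Helpers4
variable {r : ℕ}

lemma SS_move1 {k : ℤ} (hk : 1 ≤ k) (hk2 : k + 1 ≤ (r:ℤ)) (μ : Lam r) :
    SS r (μ + (epsv r (k:ℚ) - epsv r ((k+1:ℤ):ℚ)))
      = SS r μ + (sval r k μ + (1 - sval r (k+1) μ)) := by
  unfold SS
  have h := sum_gg_two (r := r) (fun a => sval r ((a:ℤ)+1) μ)
      (fun a => sval r ((a:ℤ)+1) (μ + (epsv r (k:ℚ) - epsv r ((k+1:ℤ):ℚ))))
      (x := (k-1).toNat) (y := k.toNat)
      (Finset.mem_range.mpr (by omega)) (Finset.mem_range.mpr (by omega)) (by omega) ?_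
  · rw [h]
    have e1 : (((k-1).toNat:ℤ)+1) = k := by omega
    have e2 : ((k.toNat:ℤ)+1) = k+1 := by omega
    rw [e1, e2]
  · intro a ha
    rw [Finset.mem_range] at ha
    unfold sval
    rw [co_move (m := (a:ℤ)+1) (u := k) (v := k+1) (by omega) (by omega) (by omega) (by omega) (by omega) (by omega),
        co_move (m := -((a:ℤ)+1)) (u := k) (v := k+1) (by omega) (by omega) (by omega) (by omega) (by omega) (by omega)]
    have c1 : ((a:ℤ)+1 = k) ↔ (a = (k-1).toNat) := by omega
    have c2 : ((a:ℤ)+1 = k+1) ↔ (a = k.toNat) := by omega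
    have c3 : ¬(-((a:ℤ)+1) = k) := by omega
    have c4 : ¬(-((a:ℤ)+1) = k+1) := by omega
    simp only [c1, c2, if_neg c3, if_neg c4]
    ring

lemma SS_move2 {k : ℤ} (hk : 1 ≤ k) (hk2 : k + 1 ≤ (r:ℤ)) (μ : Lam r) :
    SS r (μ + (epsv r ((-k-1:ℤ):ℚ) - epsv r ((-k:ℤ):ℚ)))
      = SS r μ + (sval r (k+1) μ + (1 - sval r k μ)) := by
  unfold SS
  have h := sum_gg_two (r := r) (fun a => sval r ((a:ℤ)+1) μ)
      (fun a => sval r ((a:ℤ)+1) (μ + (epsv r ((-k-1:ℤ):ℚ) - epsv r ((-k:ℤ):ℚ))))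
      (x := k.toNat) (y := (k-1).toNat)
      (Finset.mem_range.mpr (by omega)) (Finset.mem_range.mpr (by omega)) (by omega) ?_
  · rw [h]
    have e1 : (((k-1).toNat:ℤ)+1) = k := by omega
    have e2 : ((k.toNat:ℤ)+1) = k+1 := by omega
    rw [e1, e2]
  · intro a ha
    rw [Finset.mem_range] at ha
    unfold sval
    rw [co_move (m := (a:ℤ)+1) (u := -k-1) (v := -k) (by omega) (by omega) (by omega) (by omega) (by omega) (by omega),
        co_move (m := -((a:ℤ)+1)) (u := -k-1) (v := -k) (by omega) (by omega) (by omega) (by omega) (by omega) (by omega)]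
    have c1 : ¬((a:ℤ)+1 = -k-1) := by omega
    have c2 : ¬((a:ℤ)+1 = -k) := by omega
    have c3 : (-((a:ℤ)+1) = -k-1) ↔ (a = k.toNat) := by omega
    have c4 : (-((a:ℤ)+1) = -k) ↔ (a = (k-1).toNat) := by omega
    simp only [c3, c4, if_neg c1, if_neg c2]
    ring

lemma SS_move3 (hr : 1 ≤ r) (μ : Lam r) :
    SS r (μ + (epsv r ((0:ℤ):ℚ) - epsv r ((1:ℤ):ℚ)))
      = SS r μ + (1 - sval r 1 μ) := by
  unfold SS
  have h := sum_gg_one (r := r) (fun a => sval r ((a:ℤ)+1) μ)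
      (fun a => sval r ((a:ℤ)+1) (μ + (epsv r ((0:ℤ):ℚ) - epsv r ((1:ℤ):ℚ))))
      (x := 0) (Finset.mem_range.mpr (by omega)) (-1) (Or.inr rfl) ?_
  · rw [h, if_neg (by norm_num)]
    norm_num
  · intro a ha
    rw [Finset.mem_range] at ha
    unfold sval
    rw [co_move (m := (a:ℤ)+1) (u := 0) (v := 1) (by omega) (by omega) (by omega) (by omega) (by omega) (by omega),
        co_move (m := -((a:ℤ)+1)) (u := 0) (v := 1) (by omega) (by omega) (by omega) (by omega) (by omega) (by omega)]
    have c1 : ¬((a:ℤ)+1 = 0) := by omega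
    have c2 : ((a:ℤ)+1 = 1) ↔ (a = 0) := by omega
    have c3 : ¬(-((a:ℤ)+1) = 0) := by omega
    have c4 : ¬(-((a:ℤ)+1) = 1) := by omega
    simp only [c2, if_neg c1, if_neg c3, if_neg c4]
    by_cases h0 : a = 0 <;> simp [h0] <;> ring

lemma SS_move4 (hr : 1 ≤ r) (μ : Lam r) :
    SS r (μ + (epsv r ((-1:ℤ):ℚ) - epsv r ((0:ℤ):ℚ)))
      = SS r μ + sval r 1 μ := by
  unfold SS
  have h := sum_gg_one (r := r) (fun a => sval r ((a:ℤ)+1) μ)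
      (fun a => sval r ((a:ℤ)+1) (μ + (epsv r ((-1:ℤ):ℚ) - epsv r ((0:ℤ):ℚ))))
      (x := 0) (Finset.mem_range.mpr (by omega)) 1 (Or.inl rfl) ?_
  · rw [h, if_pos rfl]
    norm_num
  · intro a ha
    rw [Finset.mem_range] at ha
    unfold sval
    rw [co_move (m := (a:ℤ)+1) (u := -1) (v := 0) (by omega) (by omega) (by omega) (by omega) (by omega) (by omega),
        co_move (m := -((a:ℤ)+1)) (u := -1) (v := 0) (by omega) (by omega) (by omega) (by omega) (by omega) (by omega)]
    have c1 : ¬((a:ℤ)+1 = -1) := by omega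
    have c2 : ¬((a:ℤ)+1 = 0) := by omega
    have c3 : (-((a:ℤ)+1) = -1) ↔ (a = 0) := by omega
    have c4 : ¬(-((a:ℤ)+1) = 0) := by omega
    simp only [c3, if_neg c1, if_neg c2, if_neg c4]
    by_cases h0 : a = 0 <;> simp [h0] <;> ring

end Helpers4
section Helpers5
variable {r : ℕ}

lemma BB_move1 {k : ℤ} (hk : 1 ≤ k) (hk2 : k + 1 ≤ (r:ℤ)) (μ : Lam r) :
    BB r (μ + (epsv r (k:ℚ) - epsv r ((k+1:ℤ):ℚ)))
      = BB r μ + (sval r k μ - sval r (k+1) μ + 2) := by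
  unfold BB
  rw [SS_move1 hk hk2, LL_move (by omega) (by omega) (by omega) (by omega),
      co_move (m := 0) (u := k) (v := k+1) (by omega) (by omega) (by omega) (by omega)
        (by omega) (by omega),
      if_neg (by omega : ¬(0:ℤ) = k), if_neg (by omega : ¬(0:ℤ) = k+1)]
  ring

lemma BB_move2 {k : ℤ} (hk : 1 ≤ k) (hk2 : k + 1 ≤ (r:ℤ)) (μ : Lam r) :
    BB r (μ + (epsv r ((-k-1:ℤ):ℚ) - epsv r ((-k:ℤ):ℚ)))
      = BB r μ + (sval r (k+1) μ - sval r k μ + 2) := by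
  unfold BB
  rw [SS_move2 hk hk2, LL_move (by omega) (by omega) (by omega) (by omega),
      co_move (m := 0) (u := -k-1) (v := -k) (by omega) (by omega) (by omega) (by omega)
        (by omega) (by omega),
      if_neg (by omega : ¬(0:ℤ) = -k-1), if_neg (by omega : ¬(0:ℤ) = -k)]
  ring

lemma BB_move3 (hr : 1 ≤ r) (μ : Lam r) :
    BB r (μ + (epsv r ((0:ℤ):ℚ) - epsv r ((1:ℤ):ℚ)))
      = BB r μ + (2 * co r 0 μ - sval r 1 μ + 2) := by
  unfold BB
  rw [SS_move3 hr, LL_move (by omega) (by omega) (by omega) (by omega),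
      co_move (m := 0) (u := 0) (v := 1) (by omega) (by omega) (by omega) (by omega)
        (by omega) (by omega),
      if_pos rfl, if_neg (by omega : ¬(0:ℤ) = 1)]
  ring

lemma BB_move4 (hr : 1 ≤ r) (μ : Lam r) :
    BB r (μ + (epsv r ((-1:ℤ):ℚ) - epsv r ((0:ℤ):ℚ)))
      = BB r μ + (sval r 1 μ - 2 * co r 0 μ + 3) := by
  unfold BB
  rw [SS_move4 hr, LL_move (by omega) (by omega) (by omega) (by omega),
      co_move (m := 0) (u := -1) (v := 0) (by omega) (by omega) (by omega) (by omega)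
        (by omega) (by omega),
      if_neg (by omega : ¬(0:ℤ) = -1), if_pos rfl]
  ring

lemma zeta_ne (μ : Lam r) : zeta r μ ≠ 0 := by
  unfold zeta
  exact mul_ne_zero (mul_ne_zero (zpow_ne_zero _ (by norm_num)) (zpow_ne_zero _ pp_ne))
    (zpow_ne_zero _ qq_ne)

lemma zeta_step (μ ν : Lam r) (E d : ℤ)
    (hn : nn r ν = nn r μ - 1) (hc : co r 0 ν = co r 0 μ + d) (hB : BB r ν = BB r μ + E) :
    zeta r ν = -(pp^d * qq^E) * zeta r μ := by
  unfold zeta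
  rw [hn, hc, hB,
      show (r:ℤ) + (nn r μ - 1) = ((r:ℤ) + nn r μ) + (-1) by ring,
      zpow_add₀ (by norm_num : (-1:K2) ≠ 0),
      zpow_add₀ pp_ne,
      show BB r μ + E - 2*(r:ℤ) = (BB r μ - 2*(r:ℤ)) + E by ring,
      zpow_add₀ qq_ne]
  rw [zpow_neg_one]
  have : ((-1:K2))⁻¹ = -1 := by norm_num
  rw [this]
  ring

end Helpers5
section Helpers6
variable {r : ℕ}

lemma alR_pos (k : ℤ) : alR r ((k:ℚ)+1/2) = epsv r (k:ℚ) - epsv r ((k+1:ℤ):ℚ) := by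
  unfold alR
  have h1 : (k:ℚ) + 1/2 - 1/2 = (k:ℚ) := by ring
  have h2 : (k:ℚ) + 1/2 + 1/2 = ((k+1:ℤ):ℚ) := by push_cast; ring
  rw [h1, h2]

lemma alR_neg (k : ℤ) : alR r (-((k:ℚ)+1/2)) = epsv r ((-k-1:ℤ):ℚ) - epsv r ((-k:ℤ):ℚ) := by
  unfold alR
  have h1 : -((k:ℚ)+1/2) - 1/2 = ((-k-1:ℤ):ℚ) := by push_cast; ring
  have h2 : -((k:ℚ)+1/2) + 1/2 = ((-k:ℤ):ℚ) := by push_cast; ring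
  rw [h1, h2]

lemma alR_half : alR r (1/2 : ℚ) = epsv r ((0:ℤ):ℚ) - epsv r ((1:ℤ):ℚ) := by
  unfold alR
  norm_num

lemma alR_mhalf : alR r (-(1/2) : ℚ) = epsv r ((-1:ℤ):ℚ) - epsv r ((0:ℤ):ℚ) := by
  unfold alR
  norm_num

lemma nn_epsv {w : ℤ} (hw1 : -(r:ℤ) ≤ w) (hw2 : w ≤ r) : nn r (epsv r (w:ℚ)) = w :=
  sum_epsv hw1 hw2 (fun m => m)

lemma LL_epsv {w : ℤ} (hw1 : -(r:ℤ) ≤ w) (hw2 : w ≤ r) :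
    LL r (epsv r (w:ℚ)) = (r:ℤ) - w :=
  sum_epsv hw1 hw2 (fun m => (r:ℤ) - m)

lemma gg_zero : gg 0 = 0 := by norm_num [gg]

lemma gg_one : gg 1 = 0 := by norm_num [gg]

lemma SS_epsv_neg_r (hr : 1 ≤ r) : SS r (epsv r ((-(r:ℤ) : ℤ):ℚ)) = 0 := by
  unfold SS
  apply Finset.sum_eq_zero
  intro a ha
  rw [Finset.mem_range] at ha
  unfold sval
  rw [co_epsv (by omega) (by omega) (by omega) (by omega),
      co_epsv (by omega) (by omega) (by omega) (by omega),
      if_neg (by omega : ¬((a:ℤ)+1 = -(r:ℤ)))]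
  by_cases h : -((a:ℤ)+1) = -(r:ℤ)
  · rw [if_pos h]; norm_num [gg_one]
  · rw [if_neg h]; norm_num [gg_zero]

lemma zeta_norm (hr : 1 ≤ r) : zeta r (epsv r ((-(r:ℤ) : ℤ):ℚ)) = 1 := by
  unfold zeta BB
  rw [nn_epsv (by omega) (by omega), LL_epsv (by omega) (by omega),
      SS_epsv_neg_r hr, co_epsv (by omega) (by omega) (by omega) (by omega),
      if_neg (by omega : ¬(0:ℤ) = -(r:ℤ))]
  norm_num
  have e : (r:ℤ) + (r:ℤ) - 2*(r:ℤ) = 0 := by ring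
  rw [e, zpow_zero]

end Helpers6
section Helpers7
variable {r : ℕ}

lemma zeta_cond12 (μ : Lam r) (i : ℚ) (hmem : i ∈ Ijset r) (hne : i ≠ 1/2) :
    zeta r (μ + alR r i)
        = -(qq ^ (bilin (alR r i - alR r (-i)) (μ + alR r i))) * zeta r μ ∧
    zeta r (μ + alR r (-i))
        = -(qq ^ (bilin (alR r (-i)) (μ + alR r (-i)) - bilin (alR r i) μ)) * zeta r μ := by
  obtain ⟨k0, hk0r, hi⟩ := hmem
  have hk0 : 1 ≤ (k0:ℤ) := by
    rcases Nat.eq_zero_or_pos k0 with h | h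
    · exfalso; apply hne; rw [hi, h]; norm_num
    · omega
  have hkr : (k0:ℤ) + 1 ≤ (r:ℤ) := by omega
  subst hi
  have hcast : ((k0:ℕ):ℚ) = (((k0:ℤ)):ℚ) := by push_cast; ring
  rw [hcast, alR_pos (k0:ℤ), alR_neg (k0:ℤ)]
  set k : ℤ := (k0:ℤ) with hkdef
  constructor
  · -- positive root move
    have hE : bilin ((epsv r (k:ℚ) - epsv r ((k+1:ℤ):ℚ))
          - (epsv r ((-k-1:ℤ):ℚ) - epsv r ((-k:ℤ):ℚ)))
        (μ + (epsv r (k:ℚ) - epsv r ((k+1:ℤ):ℚ)))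
        = sval r k μ - sval r (k+1) μ + 2 := by
      rw [bilin_sub_left, bilin_epsv, bilin_epsv,
          co_move (m := k) (u := k) (v := k+1) (by omega) (by omega) (by omega) (by omega)
            (by omega) (by omega),
          co_move (m := k+1) (u := k) (v := k+1) (by omega) (by omega) (by omega) (by omega)
            (by omega) (by omega),
          co_move (m := -k-1) (u := k) (v := k+1) (by omega) (by omega) (by omega) (by omega)
            (by omega) (by omega),
          co_move (m := -k) (u := k) (v := k+1) (by omega) (by omega) (by omega) (by omega)
            (by omega) (by omega),
          if_pos rfl, if_neg (by omega : ¬k = k+1), if_neg (by omega : ¬k+1 = k),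
          if_pos rfl, if_neg (by omega : ¬-k-1 = k), if_neg (by omega : ¬-k-1 = k+1),
          if_neg (by omega : ¬-k = k), if_neg (by omega : ¬-k = k+1)]
      unfold sval
      ring
    rw [hE]
    have hstep := zeta_step (r := r) μ (μ + (epsv r (k:ℚ) - epsv r ((k+1:ℤ):ℚ)))
        (sval r k μ - sval r (k+1) μ + 2) 0
        (by rw [nn_move (by omega) (by omega) (by omega) (by omega)]; ring)
        (by rw [co_move (m := 0) (u := k) (v := k+1) (by omega) (by omega) (by omega)
            (by omega) (by omega) (by omega),
            if_neg (by omega : ¬(0:ℤ) = k), if_neg (by omega : ¬(0:ℤ) = k+1)]; ring)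
        (BB_move1 hk0 hkr μ)
    rw [hstep, zpow_zero, one_mul]
  · -- negative root move
    have hE : bilin (epsv r ((-k-1:ℤ):ℚ) - epsv r ((-k:ℤ):ℚ))
          (μ + (epsv r ((-k-1:ℤ):ℚ) - epsv r ((-k:ℤ):ℚ)))
          - bilin (epsv r (k:ℚ) - epsv r ((k+1:ℤ):ℚ)) μ
        = sval r (k+1) μ - sval r k μ + 2 := by
      rw [bilin_epsv, bilin_epsv,
          co_move (m := -k-1) (u := -k-1) (v := -k) (by omega) (by omega) (by omega) (by omega)
            (by omega) (by omega),
          co_move (m := -k) (u := -k-1) (v := -k) (by omega) (by omega) (by omega) (by omega)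
            (by omega) (by omega),
          if_pos rfl, if_neg (by omega : ¬-k-1 = -k), if_neg (by omega : ¬-k = -k-1),
          if_pos rfl]
      unfold sval
      ring
    rw [hE]
    have hstep := zeta_step (r := r) μ (μ + (epsv r ((-k-1:ℤ):ℚ) - epsv r ((-k:ℤ):ℚ)))
        (sval r (k+1) μ - sval r k μ + 2) 0
        (by rw [nn_move (by omega) (by omega) (by omega) (by omega)]; ring)
        (by rw [co_move (m := 0) (u := -k-1) (v := -k) (by omega) (by omega) (by omega)
            (by omega) (by omega) (by omega),
            if_neg (by omega : ¬(0:ℤ) = -k-1), if_neg (by omega : ¬(0:ℤ) = -k)]; ring)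
        (BB_move2 hk0 hkr μ)
    rw [hstep, zpow_zero, one_mul]

lemma zeta_cond3 (hr : 1 ≤ r) (μ : Lam r) :
    zeta r (μ + alR r (1/2))
      = -pp * qq ^ (bilin (alR r (1/2) - alR r (-(1/2))) (μ + alR r (1/2)) - 1) * zeta r μ := by
  rw [alR_half, alR_mhalf]
  have hE : bilin ((epsv r ((0:ℤ):ℚ) - epsv r ((1:ℤ):ℚ))
        - (epsv r ((-1:ℤ):ℚ) - epsv r ((0:ℤ):ℚ)))
      (μ + (epsv r ((0:ℤ):ℚ) - epsv r ((1:ℤ):ℚ)))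
      = 2 * co r 0 μ - sval r 1 μ + 3 := by
    rw [bilin_sub_left, bilin_epsv, bilin_epsv,
        co_move (m := 0) (u := 0) (v := 1) (by omega) (by omega) (by omega) (by omega)
          (by omega) (by omega),
        co_move (m := 1) (u := 0) (v := 1) (by omega) (by omega) (by omega) (by omega)
          (by omega) (by omega),
        co_move (m := -1) (u := 0) (v := 1) (by omega) (by omega) (by omega) (by omega)
          (by omega) (by omega),
        if_pos rfl, if_neg (by omega : ¬(0:ℤ) = 1), if_neg (by omega : ¬(1:ℤ) = 0),
        if_pos rfl, if_neg (by omega : ¬(-1:ℤ) = 0), if_neg (by omega : ¬(-1:ℤ) = 1)]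
    unfold sval
    ring
  rw [hE]
  have e : 2 * co r 0 μ - sval r 1 μ + 3 - 1 = 2 * co r 0 μ - sval r 1 μ + 2 := by ring
  rw [e]
  have hstep := zeta_step (r := r) μ (μ + (epsv r ((0:ℤ):ℚ) - epsv r ((1:ℤ):ℚ)))
      (2 * co r 0 μ - sval r 1 μ + 2) 1
      (by rw [nn_move (by omega) (by omega) (by omega) (by omega)]; ring)
      (by rw [co_move (m := 0) (u := 0) (v := 1) (by omega) (by omega) (by omega)
          (by omega) (by omega) (by omega),
          if_pos rfl, if_neg (by omega : ¬(0:ℤ) = 1)]; ring)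
      (BB_move3 hr μ)
  rw [hstep, zpow_one]
  ring

lemma zeta_cond4 (hr : 1 ≤ r) (μ : Lam r) :
    zeta r (μ + alR r (-(1/2)))
      = -pp⁻¹ * qq ^ (bilin (alR r (-(1/2))) (μ + alR r (-(1/2))) - bilin (alR r (1/2)) μ + 1)
          * zeta r μ := by
  rw [alR_half, alR_mhalf]
  have hE : bilin (epsv r ((-1:ℤ):ℚ) - epsv r ((0:ℤ):ℚ))
        (μ + (epsv r ((-1:ℤ):ℚ) - epsv r ((0:ℤ):ℚ)))
        - bilin (epsv r ((0:ℤ):ℚ) - epsv r ((1:ℤ):ℚ)) μ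
      = sval r 1 μ - 2 * co r 0 μ + 2 := by
    rw [bilin_epsv, bilin_epsv,
        co_move (m := -1) (u := -1) (v := 0) (by omega) (by omega) (by omega) (by omega)
          (by omega) (by omega),
        co_move (m := 0) (u := -1) (v := 0) (by omega) (by omega) (by omega) (by omega)
          (by omega) (by omega),
        if_pos rfl, if_neg (by omega : ¬(-1:ℤ) = 0), if_neg (by omega : ¬(0:ℤ) = -1),
        if_pos rfl]
    unfold sval
    ring
  rw [hE]
  have e : sval r 1 μ - 2 * co r 0 μ + 2 + 1 = sval r 1 μ - 2 * co r 0 μ + 3 := by ring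
  rw [e]
  have hstep := zeta_step (r := r) μ (μ + (epsv r ((-1:ℤ):ℚ) - epsv r ((0:ℤ):ℚ)))
      (sval r 1 μ - 2 * co r 0 μ + 3) (-1)
      (by rw [nn_move (by omega) (by omega) (by omega) (by omega)]; ring)
      (by rw [co_move (m := 0) (u := -1) (v := 0) (by omega) (by omega) (by omega)
          (by omega) (by omega) (by omega),
          if_neg (by omega : ¬(0:ℤ) = -1), if_pos rfl]; ring)
      (BB_move4 hr μ)
  rw [hstep, zpow_neg_one]
  ring

lemma zeta_zetaCond (hr : 1 ≤ r) : zetaCond r (zeta r) :=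
  ⟨zeta_ne, fun μ i hm hn => zeta_cond12 μ i hm hn, zeta_cond3 hr, zeta_cond4 hr⟩

end Helpers7
section Helpers8
variable {r : ℕ}

lemma chainNeg {ζ : Lam r → K2} (hz : zetaCond r ζ) {k : ℤ} (hk : 1 ≤ k)
    (hk2 : k + 1 ≤ (r:ℤ)) :
    ζ (epsv r ((-k-1:ℤ):ℚ)) = -qq * ζ (epsv r ((-k:ℤ):ℚ)) := by
  have hnat : ((k.toNat:ℕ):ℚ) = (k:ℚ) := by
    exact_mod_cast congrArg (fun z : ℤ => (z:ℚ)) (Int.toNat_of_nonneg (by omega : (0:ℤ) ≤ k))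
  have hmem : ((k:ℚ) + 1/2) ∈ Ijset r := ⟨k.toNat, by omega, by rw [hnat]⟩
  have hne : (k:ℚ) + 1/2 ≠ 1/2 := by
    intro h
    have h0 : (k:ℚ) = 0 := by linarith
    have : k = 0 := by exact_mod_cast h0
    omega
  have h2 := (hz.2.1 (epsv r ((-k:ℤ):ℚ)) ((k:ℚ)+1/2) hmem hne).2
  rw [alR_pos k, alR_neg k] at h2
  have hadd : epsv r ((-k:ℤ):ℚ) + (epsv r ((-k-1:ℤ):ℚ) - epsv r ((-k:ℤ):ℚ))
      = epsv r ((-k-1:ℤ):ℚ) := by abel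
  rw [hadd] at h2
  have hE : bilin (epsv r ((-k-1:ℤ):ℚ) - epsv r ((-k:ℤ):ℚ)) (epsv r ((-k-1:ℤ):ℚ))
      - bilin (epsv r (k:ℚ) - epsv r ((k+1:ℤ):ℚ)) (epsv r ((-k:ℤ):ℚ)) = 1 := by
    rw [bilin_epsv, bilin_epsv,
        co_epsv (m := -k-1) (m' := -k-1) (by omega) (by omega) (by omega) (by omega),
        co_epsv (m := -k) (m' := -k-1) (by omega) (by omega) (by omega) (by omega),
        co_epsv (m := k) (m' := -k) (by omega) (by omega) (by omega) (by omega),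
        co_epsv (m := k+1) (m' := -k) (by omega) (by omega) (by omega) (by omega),
        if_pos rfl, if_neg (by omega : ¬-k = -k-1), if_neg (by omega : ¬k = -k),
        if_neg (by omega : ¬k+1 = -k)]
    norm_num
  rw [hE, zpow_one] at h2
  exact h2

lemma chainPos {ζ : Lam r → K2} (hz : zetaCond r ζ) {k : ℤ} (hk : 1 ≤ k)
    (hk2 : k + 1 ≤ (r:ℤ)) :
    ζ (epsv r (k:ℚ)) = -qq * ζ (epsv r ((k+1:ℤ):ℚ)) := by
  have hnat : ((k.toNat:ℕ):ℚ) = (k:ℚ) := by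
    exact_mod_cast congrArg (fun z : ℤ => (z:ℚ)) (Int.toNat_of_nonneg (by omega : (0:ℤ) ≤ k))
  have hmem : ((k:ℚ) + 1/2) ∈ Ijset r := ⟨k.toNat, by omega, by rw [hnat]⟩
  have hne : (k:ℚ) + 1/2 ≠ 1/2 := by
    intro h
    have h0 : (k:ℚ) = 0 := by linarith
    have : k = 0 := by exact_mod_cast h0
    omega
  have h2 := (hz.2.1 (epsv r ((k+1:ℤ):ℚ)) ((k:ℚ)+1/2) hmem hne).1
  rw [alR_pos k, alR_neg k] at h2
  have hadd : epsv r ((k+1:ℤ):ℚ) + (epsv r (k:ℚ) - epsv r ((k+1:ℤ):ℚ))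
      = epsv r (k:ℚ) := by abel
  rw [hadd] at h2
  have hE : bilin ((epsv r (k:ℚ) - epsv r ((k+1:ℤ):ℚ))
        - (epsv r ((-k-1:ℤ):ℚ) - epsv r ((-k:ℤ):ℚ))) (epsv r (k:ℚ)) = 1 := by
    rw [bilin_sub_left, bilin_epsv, bilin_epsv,
        co_epsv (m := k) (m' := k) (by omega) (by omega) (by omega) (by omega),
        co_epsv (m := k+1) (m' := k) (by omega) (by omega) (by omega) (by omega),
        co_epsv (m := -k-1) (m' := k) (by omega) (by omega) (by omega) (by omega),
        co_epsv (m := -k) (m' := k) (by omega) (by omega) (by omega) (by omega),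
        if_pos rfl, if_neg (by omega : ¬k+1 = k), if_neg (by omega : ¬-k-1 = k),
        if_neg (by omega : ¬-k = k)]
    norm_num
  rw [hE, zpow_one] at h2
  exact h2

lemma chain0 {ζ : Lam r → K2} (hz : zetaCond r ζ) (hr : 1 ≤ r) :
    ζ (epsv r ((-1:ℤ):ℚ)) = -pp⁻¹ * qq * ζ (epsv r ((0:ℤ):ℚ)) := by
  have h2 := hz.2.2.2 (epsv r ((0:ℤ):ℚ))
  rw [alR_mhalf, alR_half] at h2
  have hadd : epsv r ((0:ℤ):ℚ) + (epsv r ((-1:ℤ):ℚ) - epsv r ((0:ℤ):ℚ))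
      = epsv r ((-1:ℤ):ℚ) := by abel
  rw [hadd] at h2
  have hE : bilin (epsv r ((-1:ℤ):ℚ) - epsv r ((0:ℤ):ℚ)) (epsv r ((-1:ℤ):ℚ))
      - bilin (epsv r ((0:ℤ):ℚ) - epsv r ((1:ℤ):ℚ)) (epsv r ((0:ℤ):ℚ)) + 1 = 1 := by
    rw [bilin_epsv, bilin_epsv,
        co_epsv (m := -1) (m' := -1) (by omega) (by omega) (by omega) (by omega),
        co_epsv (m := 0) (m' := -1) (by omega) (by omega) (by omega) (by omega),
        co_epsv (m := 0) (m' := 0) (by omega) (by omega) (by omega) (by omega),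
        co_epsv (m := 1) (m' := 0) (by omega) (by omega) (by omega) (by omega),
        if_pos rfl, if_neg (by omega : ¬(0:ℤ) = -1), if_pos rfl,
        if_neg (by omega : ¬(1:ℤ) = 0)]
    norm_num
  rw [hE, zpow_one] at h2
  exact h2

lemma chain0' {ζ : Lam r → K2} (hz : zetaCond r ζ) (hr : 1 ≤ r) :
    ζ (epsv r ((0:ℤ):ℚ)) = -pp * qq * ζ (epsv r ((1:ℤ):ℚ)) := by
  have h2 := hz.2.2.1 (epsv r ((1:ℤ):ℚ))
  rw [alR_mhalf, alR_half] at h2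
  have hadd : epsv r ((1:ℤ):ℚ) + (epsv r ((0:ℤ):ℚ) - epsv r ((1:ℤ):ℚ))
      = epsv r ((0:ℤ):ℚ) := by abel
  rw [hadd] at h2
  have hE : bilin ((epsv r ((0:ℤ):ℚ) - epsv r ((1:ℤ):ℚ))
        - (epsv r ((-1:ℤ):ℚ) - epsv r ((0:ℤ):ℚ))) (epsv r ((0:ℤ):ℚ)) - 1 = 1 := by
    rw [bilin_sub_left, bilin_epsv, bilin_epsv,
        co_epsv (m := 0) (m' := 0) (by omega) (by omega) (by omega) (by omega),
        co_epsv (m := 1) (m' := 0) (by omega) (by omega) (by omega) (by omega),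
        co_epsv (m := -1) (m' := 0) (by omega) (by omega) (by omega) (by omega),
        if_pos rfl, if_neg (by omega : ¬(1:ℤ) = 0), if_neg (by omega : ¬(-1:ℤ) = 0)]
    norm_num
  rw [hE, zpow_one] at h2
  exact h2

end Helpers8
/-- there exists a nowhere-vanishing `ζ : Λ → ℚ(p,q)` satisfying the recursions
with `ζ(ε_{-r}) = 1`; every such `ζ` satisfies `ζ(ε_{-i}) = (-q)^{-r+i}` for `i ≠ 0` and
`ζ(ε_0) = p (-q)^{-r}`. -/
theorem zeta_exists_odd (r : ℕ) (hr : 1 ≤ r) :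
    (∃ ζ : Lam r → K2, zetaCond r ζ ∧ ζ (epsv r (-(r : ℚ))) = 1) ∧
    (∀ ζ : Lam r → K2, zetaCond r ζ → ζ (epsv r (-(r : ℚ))) = 1 →
      (∀ i : ℤ, -(r : ℤ) ≤ i → i ≤ r → i ≠ 0 →
        ζ (epsv r (-(i : ℚ))) = (-qq) ^ (-(r : ℤ) + i)) ∧
      ζ (epsv r 0) = pp * (-qq) ^ (-(r : ℤ))) := by
  constructor
  · refine ⟨zeta r, zeta_zetaCond hr, ?_⟩
    have e : -(r:ℚ) = ((-(r:ℤ) : ℤ):ℚ) := by push_cast; ring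
    rw [e]
    exact zeta_norm hr
  · intro ζ hz hnorm
    have hnorm' : ζ (epsv r ((-(r:ℤ) : ℤ):ℚ)) = 1 := by
      have e : ((-(r:ℤ) : ℤ):ℚ) = -(r:ℚ) := by push_cast; ring
      rw [e]; exact hnorm
    -- values at ε_{-k} for 1 ≤ k ≤ r
    have valNeg : ∀ j : ℕ, (j:ℤ) ≤ (r:ℤ) - 1 →
        ζ (epsv r ((-(r:ℤ) + (j:ℤ) : ℤ):ℚ)) = (-qq)^(-(j:ℤ)) := by
      intro j
      induction j with
      | zero =>
        intro _
        have e : (-(r:ℤ) + ((0:ℕ):ℤ) : ℤ) = (-(r:ℤ) : ℤ) := by push_cast; ring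
        rw [e, hnorm']
        norm_num
      | succ j ih =>
        intro hj
        have hj' : (j:ℤ) ≤ (r:ℤ) - 1 := by push_cast at hj ⊢; omega
        have ihv := ih hj'
        have hch := chainNeg hz (k := (r:ℤ) - 1 - j) (by push_cast at hj; omega) (by omega)
        have e1 : (-((r:ℤ)-1-(j:ℤ))-1 : ℤ) = (-(r:ℤ) + (j:ℤ) : ℤ) := by ring
        have e2 : (-((r:ℤ)-1-(j:ℤ)) : ℤ) = (-(r:ℤ) + ((j+1:ℕ):ℤ) : ℤ) := by push_cast; ring
        rw [e1, e2, ihv] at hch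
        set X := ζ (epsv r ((-(r:ℤ) + ((j+1:ℕ):ℤ) : ℤ):ℚ)) with hX
        have hX2 : X = (-qq)⁻¹ * ((-qq) * X) := by
          rw [← mul_assoc, inv_mul_cancel₀ nqq_ne, one_mul]
        rw [← hch, ← zpow_neg_one (-qq), ← zpow_add₀ nqq_ne] at hX2
        rw [hX2]
        congr 1
        push_cast
        ring
    have negVal : ∀ k : ℤ, 1 ≤ k → k ≤ (r:ℤ) →
        ζ (epsv r ((-k:ℤ):ℚ)) = (-qq)^(k - (r:ℤ)) := by
      intro k hk1 hk2
      obtain ⟨j, hj⟩ : ∃ j : ℕ, (j:ℤ) = (r:ℤ) - k := ⟨((r:ℤ) - k).toNat, by omega⟩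
      have hv := valNeg j (by omega)
      have e : (-(r:ℤ) + (j:ℤ) : ℤ) = -k := by omega
      have e' : -(j:ℤ) = k - (r:ℤ) := by omega
      rw [e, e'] at hv
      exact hv
    -- value at ε_0
    have e0 : ζ (epsv r ((0:ℤ):ℚ)) = pp * (-qq) ^ (-(r:ℤ)) := by
      have hm1 := negVal 1 (by norm_num) (by omega)
      have hc0 := chain0 hz hr
      rw [hm1] at hc0
      have hXa : -pp⁻¹ * qq * (pp * (-qq)^(-(r:ℤ))) = (-qq)^(1-(r:ℤ)) := by
        have h1 := zpow_add₀ nqq_ne 1 (-(r:ℤ))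
        have e : (1 + -(r:ℤ)) = 1 - (r:ℤ) := by ring
        rw [e, zpow_one] at h1
        rw [h1]
        have hpp : pp⁻¹ * pp = 1 := inv_mul_cancel₀ pp_ne
        calc -pp⁻¹ * qq * (pp * (-qq)^(-(r:ℤ)))
            = (pp⁻¹ * pp) * (-qq * (-qq)^(-(r:ℤ))) := by ring
          _ = -qq * (-qq)^(-(r:ℤ)) := by rw [hpp, one_mul]
      have hcan : -pp⁻¹ * qq * ζ (epsv r ((0:ℤ):ℚ))
          = -pp⁻¹ * qq * (pp * (-qq)^(-(r:ℤ))) := by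
        rw [← hc0, hXa]
      exact mul_left_cancel₀
        (mul_ne_zero (neg_ne_zero.mpr (inv_ne_zero pp_ne)) qq_ne) hcan
    -- value at ε_1
    have e1v : ζ (epsv r ((1:ℤ):ℚ)) = (-qq) ^ (-(r:ℤ)-1) := by
      have hc := chain0' hz hr
      rw [e0] at hc
      have hXa : -pp * qq * ((-qq)^(-(r:ℤ)-1)) = pp * (-qq)^(-(r:ℤ)) := by
        have h1 := zpow_add₀ nqq_ne 1 (-(r:ℤ)-1)
        have e : (1 + (-(r:ℤ)-1)) = -(r:ℤ) := by ring
        rw [e, zpow_one] at h1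
        rw [h1]
        ring
      have hcan : -pp * qq * ζ (epsv r ((1:ℤ):ℚ))
          = -pp * qq * ((-qq)^(-(r:ℤ)-1)) := by
        rw [← hc, hXa]
      exact mul_left_cancel₀ (mul_ne_zero (neg_ne_zero.mpr pp_ne) qq_ne) hcan
    -- values at ε_j for j ≥ 1
    have posVal : ∀ j : ℕ, (j:ℤ) + 1 ≤ (r:ℤ) →
        ζ (epsv r ((1 + (j:ℤ) : ℤ):ℚ)) = (-qq)^(-(r:ℤ)-1-(j:ℤ)) := by
      intro j
      induction j with
      | zero =>
        intro _
        have e : (1 + ((0:ℕ):ℤ) : ℤ) = (1:ℤ) := by norm_num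
        rw [e, e1v]
        norm_num
      | succ j ih =>
        intro hj
        have hj' : (j:ℤ) + 1 ≤ (r:ℤ) := by push_cast at hj; omega
        have ihv := ih hj'
        have hch := chainPos hz (k := 1 + (j:ℤ)) (by omega) (by push_cast at hj; omega)
        have e2 : ((1 + (j:ℤ)) + 1 : ℤ) = (1 + ((j+1:ℕ):ℤ) : ℤ) := by push_cast; ring
        rw [e2, ihv] at hch
        set X := ζ (epsv r ((1 + ((j+1:ℕ):ℤ) : ℤ):ℚ)) with hX
        have hX2 : X = (-qq)⁻¹ * ((-qq) * X) := by
          rw [← mul_assoc, inv_mul_cancel₀ nqq_ne, one_mul]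
        rw [← hch, ← zpow_neg_one (-qq), ← zpow_add₀ nqq_ne] at hX2
        rw [hX2]
        congr 1
        push_cast
        ring
    constructor
    · intro i hi1 hi2 hi0
      rcases lt_or_gt_of_ne hi0 with hneg | hpos
      · obtain ⟨j, hj⟩ : ∃ j : ℕ, (j:ℤ) = -i - 1 := ⟨(-i-1).toNat, by omega⟩
        have hv := posVal j (by omega)
        have e : (1 + (j:ℤ) : ℤ) = -i := by omega
        have e' : -(r:ℤ)-1-(j:ℤ) = -(r:ℤ) + i := by omega
        rw [e, e'] at hv
        have e2 : ((-i:ℤ):ℚ) = -(i:ℚ) := by push_cast; ring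
        rw [e2] at hv
        exact hv
      · have hv := negVal i hpos hi2
        have e' : i - (r:ℤ) = -(r:ℤ) + i := by ring
        rw [e'] at hv
        have e2 : ((-i:ℤ):ℚ) = -(i:ℚ) := by push_cast; ring
        rw [e2] at hv
        exact hv
    · have e : ((0:ℤ):ℚ) = (0:ℚ) := by norm_num
      rw [e] at e0
      exact e0
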